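/- When M = KN (α = 1 limit of the BD–ZF gap formula taken directly), ∑_{j=1}^{KN-1} j/(KN-j) - ∑_{k=0}^{K-1} ∑_{n=0}^{N-1} ∑_{i=kN+1}^{(K-1)N} 1/(KN-n-i) = K·∑_{j=1}^{N-1} (N-j)/j, which depends on K only through the prefactor K and when normalized by KN gives (1/N)·∑_{j=1}^{N-1} (N-j)/j, independent of K. -/

import Mathlib

open Finset

noncomputable def Hh (m : ℕ) : ℝ := ∑ d ∈ Finset.Icc 1 m, (1:ℝ)/d

lemma Hh_succ (m : ℕ) : Hh (m+1) = Hh m + 1/(m+1 : ℝ) := by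
  unfold Hh
  rw [Finset.sum_Icc_succ_top (by omega : 1 ≤ m+1)]
  push_cast; ring

lemma Gsum (m : ℕ) : ∑ t ∈ Finset.range m, Hh t = m * Hh m - m := by
  induction m with
  | zero => simp [Hh]
  | succ m ih =>
    rw [Finset.sum_range_succ, ih, Hh_succ]
    have hm : ((m:ℝ)+1) ≠ 0 := by positivity
    push_cast
    field_simp
    ring

lemma Hh_diff (a b : ℕ) (h : a ≤ b) :
    ∑ d ∈ Finset.Icc (a+1) b, (1:ℝ)/d = Hh b - Hh a := by
  unfold Hh
  rw [Finset.Icc_add_one_left_eq_Ioc]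
  have h1 : Finset.Icc 1 a = Finset.Ioc 0 a := by rw [← Finset.Icc_add_one_left_eq_Ioc]; rfl
  have h2 : Finset.Icc 1 b = Finset.Ioc 0 b := by rw [← Finset.Icc_add_one_left_eq_Ioc]; rfl
  rw [h1, h2, ← Finset.sum_Ioc_consecutive _ (Nat.zero_le a) h]
  ring

lemma refl_val (m : ℕ) (hm : 1 ≤ m) :
    ∑ d ∈ Finset.Icc 1 (m-1), ((m:ℝ) - d)/d = m * Hh (m-1) - (m-1) := by
  have : ∀ d ∈ Finset.Icc 1 (m-1), ((m:ℝ) - d)/d = (m:ℝ) * (1/d) - 1 := by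
    intro d hd
    simp only [Finset.mem_Icc] at hd
    have hd0 : (d:ℝ) ≠ 0 := Nat.cast_ne_zero.mpr (by omega)
    field_simp
  rw [Finset.sum_congr rfl this, Finset.sum_sub_distrib, ← Finset.mul_sum,
    Finset.sum_const, Nat.card_Icc]
  unfold Hh
  have : m - 1 + 1 - 1 = m - 1 := by omega
  rw [this]
  push_cast [Nat.cast_sub hm, nsmul_eq_mul]
  ring

lemma refl_sum (m : ℕ) (hm : 1 ≤ m) :
    ∑ j ∈ Finset.Icc 1 (m-1), (j:ℝ) / ((m:ℝ) - j)
      = ∑ d ∈ Finset.Icc 1 (m-1), ((m:ℝ) - d)/d := by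
  apply Finset.sum_nbij' (i := fun j => m - j) (j := fun d => m - d)
  · intro a ha; simp only [Finset.mem_Icc] at *; omega
  · intro a ha; simp only [Finset.mem_Icc] at *; omega
  · intro a ha; simp only [Finset.mem_Icc] at ha; omega
  · intro a ha; simp only [Finset.mem_Icc] at ha; omega
  · intro a ha
    simp only [Finset.mem_Icc] at ha
    have h1 : ((m - a : ℕ) : ℝ) = (m:ℝ) - a := by
      rw [Nat.cast_sub (by omega)]
    rw [h1]
    ring_nf

lemma innerSum8 (K N k n : ℕ) (hk : k < K) (hn : n < N) :
    ∑ i ∈ Finset.Icc (k*N+1) ((K-1)*N), (1:ℝ)/((K*N:ℝ) - n - i)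
      = Hh ((K-k)*N - n - 1) - Hh (N - n - 1) := by
  have e1 : (K-k)*N = K*N - k*N := by rw [Nat.sub_mul]
  have e2 : (K-1)*N = K*N - N := by rw [Nat.sub_mul]; ring_nf
  have hkN : k*N + N ≤ K*N := by
    have : (k+1)*N ≤ K*N := Nat.mul_le_mul_right N hk
    linarith [Nat.add_mul k 1 N ▸ this]
  have hab : N - n - 1 ≤ (K-k)*N - n - 1 := by omega
  rw [← Hh_diff _ _ hab]
  have hidx : N - n - 1 + 1 = N - n := by omega
  rw [hidx]
  apply Finset.sum_nbij' (i := fun i => K*N - n - i) (j := fun d => K*N - n - d)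
  · intro a ha; simp only [Finset.mem_Icc] at *; omega
  · intro a ha; simp only [Finset.mem_Icc] at *; omega
  · intro a ha; simp only [Finset.mem_Icc] at ha; omega
  · intro a ha; simp only [Finset.mem_Icc] at ha; omega
  · intro a ha
    simp only [Finset.mem_Icc] at ha
    have h1 : ((K*N - n - a : ℕ) : ℝ) = (K*N:ℝ) - n - a := by
      have h2 : K*N - n - a = K*N - (n + a) := by omega
      rw [h2, Nat.cast_sub (by omega)]
      push_cast; ring
    rw [h1]

lemma n_sum (N m : ℕ) (hm : 1 ≤ m) :
    ∑ n ∈ Finset.range N, Hh (m*N - n - 1)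
      = ∑ t ∈ Finset.range (m*N), Hh t - ∑ t ∈ Finset.range ((m-1)*N), Hh t := by
  have hle : (m-1)*N ≤ m*N := Nat.mul_le_mul_right N (by omega)
  rw [← Finset.sum_Ico_eq_sub _ hle]
  have e1 : (m-1)*N = m*N - N := by rw [Nat.sub_mul]; ring_nf
  apply Finset.sum_nbij' (i := fun n => m*N - n - 1) (j := fun t => m*N - t - 1)
  · intro a ha
    simp only [Finset.mem_range, Finset.mem_Ico] at *
    have : N ≤ m*N := by nlinarith
    omega
  · intro a ha
    simp only [Finset.mem_range, Finset.mem_Ico] at *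
    have : N ≤ m*N := by nlinarith
    omega
  · intro a ha
    simp only [Finset.mem_range] at ha
    have : N ≤ m*N := by nlinarith
    omega
  · intro a ha
    simp only [Finset.mem_Ico] at ha
    have : N ≤ m*N := by nlinarith
    omega
  · intro a ha; rfl

/-- When `M = KN`, the BD–ZF expected throughput gap equals `K ∑_{j=1}^{N-1} (N-j)/j`,
and normalized by `KN` it equals `(1/N) ∑_{j=1}^{N-1} (N-j)/j`, independent of `K`. -/
theorem stmt_8 (K N : ℕ) (hK : 0 < K) (hN : 0 < N) :
    (∑ j ∈ Finset.Icc 1 (K * N - 1), (j : ℝ) / ((K * N : ℝ) - (j : ℝ)))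
        - (∑ k ∈ Finset.range K, ∑ n ∈ Finset.range N,
            ∑ i ∈ Finset.Icc (k * N + 1) ((K - 1) * N),
              (1 : ℝ) / ((K * N : ℝ) - (n : ℝ) - (i : ℝ)))
      = (K : ℝ) * ∑ j ∈ Finset.Icc 1 (N - 1), ((N : ℝ) - (j : ℝ)) / (j : ℝ) ∧
    ((K : ℝ) * ∑ j ∈ Finset.Icc 1 (N - 1), ((N : ℝ) - (j : ℝ)) / (j : ℝ)) / ((K : ℝ) * N)
      = (1 / (N : ℝ)) * ∑ j ∈ Finset.Icc 1 (N - 1), ((N : ℝ) - (j : ℝ)) / (j : ℝ) := by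
  have hM : 1 ≤ K * N := Nat.one_le_iff_ne_zero.mpr (by positivity)
  have hN0 : (N : ℝ) ≠ 0 := Nat.cast_ne_zero.mpr hN.ne'
  have hK0 : (K : ℝ) ≠ 0 := Nat.cast_ne_zero.mpr hK.ne'
  constructor
  · set G : ℕ → ℝ := fun m => ∑ t ∈ Finset.range m, Hh t with hG
    -- S1
    have hcast : ((K * N : ℕ) : ℝ) = (K : ℝ) * N := by push_cast; ring
    have hS1 : (∑ j ∈ Finset.Icc 1 (K * N - 1), (j : ℝ) / ((K * N : ℝ) - (j : ℝ)))
        = ((K * N : ℕ) : ℝ) * Hh (K * N - 1) - (((K * N : ℕ) : ℝ) - 1) := by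
      rw [← hcast] at *
      rw [refl_sum _ hM, refl_val _ hM]
    -- RHS basic sum
    have hR : (∑ j ∈ Finset.Icc 1 (N - 1), ((N : ℝ) - (j : ℝ)) / (j : ℝ))
        = (N : ℝ) * Hh (N - 1) - ((N : ℝ) - 1) := refl_val N hN
    -- per-k sum
    have hGN : ∑ n ∈ Finset.range N, Hh (N - n - 1) = G N := by
      have h := n_sum N 1 le_rfl
      simpa using h
    have step_k : ∀ k ∈ Finset.range K,
        (∑ n ∈ Finset.range N, ∑ i ∈ Finset.Icc (k * N + 1) ((K - 1) * N),
              (1 : ℝ) / ((K * N : ℝ) - (n : ℝ) - (i : ℝ)))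
        = (G ((K - k) * N) - G ((K - (k + 1)) * N)) - G N := by
      intro k hk
      simp only [Finset.mem_range] at hk
      have h1 : ∀ n ∈ Finset.range N,
          (∑ i ∈ Finset.Icc (k * N + 1) ((K - 1) * N),
              (1 : ℝ) / ((K * N : ℝ) - (n : ℝ) - (i : ℝ)))
          = Hh ((K - k) * N - n - 1) - Hh (N - n - 1) := by
        intro n hn
        simp only [Finset.mem_range] at hn
        exact innerSum8 K N k n hk hn
      rw [Finset.sum_congr rfl h1, Finset.sum_sub_distrib, hGN]
      have h2 := n_sum N (K - k) (by omega)
      have e : K - k - 1 = K - (k + 1) := by omega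
      rw [e] at h2
      rw [h2]
    rw [Finset.sum_congr rfl step_k, Finset.sum_sub_distrib, Finset.sum_const,
      Finset.card_range]
    have tele : ∑ k ∈ Finset.range K, (G ((K - k) * N) - G ((K - (k + 1)) * N))
        = G (K * N) := by
      have h := Finset.sum_range_reflect
        (fun k => G ((K - k) * N) - G ((K - (k + 1)) * N)) K
      rw [← h]
      have h3 : ∀ j ∈ Finset.range K,
          G ((K - (K - 1 - j)) * N) - G ((K - (K - 1 - j + 1)) * N)
          = G ((j + 1) * N) - G (j * N) := by
        intro j hj
        simp only [Finset.mem_range] at hj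
        have e1 : K - (K - 1 - j) = j + 1 := by omega
        have e2 : K - (K - 1 - j + 1) = j := by omega
        rw [e1, e2]
      rw [Finset.sum_congr rfl h3, Finset.sum_range_sub (fun j => G (j * N))]
      simp [hG]
    rw [tele, hS1, hR]
    simp only [hG, Gsum]
    -- now express Hh (K*N) and Hh N via predecessors
    have hKN1 : K * N - 1 + 1 = K * N := by omega
    have hN1 : N - 1 + 1 = N := by omega
    have hHKN : Hh (K * N) = Hh (K * N - 1) + 1 / ((K : ℝ) * N) := by
      have := Hh_succ (K * N - 1)
      rw [hKN1] at this
      rw [this]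
      congr 1
      rw [Nat.cast_sub hM]
      push_cast; ring
    have hHN : Hh N = Hh (N - 1) + 1 / (N : ℝ) := by
      have := Hh_succ (N - 1)
      rw [hN1] at this
      rw [this]
      congr 1
      rw [Nat.cast_sub hN]
      push_cast; ring
    rw [hHKN, hHN]
    push_cast
    field_simp
    ring
  · field_simp
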